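/- Let k ≥ 2 be an integer, n ≥ 1, and let p be a real number with 0 ≤ p ≤ 1 - 1/k. Let F be a family of subsets of {1,…,n} that is k-wise intersecting: for all F₁, …, F_k ∈ F (not necessarily distinct), F₁ ∩ F₂ ∩ ⋯ ∩ F_k ≠ ∅. Then μ_p(F) = Σ_{A∈F} p^{|A|}(1-p)^{n-|A|} ≤ p. -/

import Mathlib

set_option linter.unusedSectionVars false
set_option linter.unusedVariables false
set_option maxHeartbeats 1000000

open Finset

namespace FranklTokushigeAux


variable {α : Type*} [DecidableEq α]

noncomputable def phi (U : Finset α) (F : Finset (Finset α)) (p : ℝ) : ℝ :=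
  ∑ A ∈ F, p ^ A.card * (1 - p) ^ (U.card - A.card)

lemma phi_nonneg (U : Finset α) (F : Finset (Finset α)) {p : ℝ} (h0 : 0 ≤ p) (h1 : p ≤ 1) :
    0 ≤ phi U F p :=
  Finset.sum_nonneg fun _ _ => mul_nonneg (pow_nonneg h0 _) (pow_nonneg (by linarith) _)

lemma phi_mono {U : Finset α} {F G : Finset (Finset α)} (h : F ⊆ G) {p : ℝ}
    (h0 : 0 ≤ p) (h1 : p ≤ 1) : phi U F p ≤ phi U G p :=
  Finset.sum_le_sum_of_subset_of_nonneg h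
    fun _ _ _ => mul_nonneg (pow_nonneg h0 _) (pow_nonneg (by linarith) _)

lemma phi_continuous (U : Finset α) (F : Finset (Finset α)) : Continuous (phi U F) := by
  unfold phi
  exact continuous_finset_sum _ fun A _ =>
    (continuous_pow _).mul ((continuous_const.sub continuous_id).pow _)

lemma phi_split {x : α} {s : Finset α} (hx : x ∉ s) {F : Finset (Finset α)}
    (hF : F ⊆ (insert x s).powerset) (p : ℝ) :
    phi (insert x s) F p
      = (1 - p) * phi s (F.filter fun A => x ∉ A) p
        + p * phi s ((F.filter fun A => x ∈ A).image fun A => A.erase x) p := by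
  classical
  unfold phi
  rw [← Finset.sum_filter_add_sum_filter_not F (fun A => x ∈ A), Finset.card_insert_of_notMem hx]
  have h1 : ∑ A ∈ F.filter (fun A => x ∈ A), p ^ A.card * (1 - p) ^ (s.card + 1 - A.card)
      = p * ∑ B ∈ (F.filter fun A => x ∈ A).image (fun A => A.erase x),
          p ^ B.card * (1 - p) ^ (s.card - B.card) := by
    rw [Finset.sum_image, Finset.mul_sum]
    · refine Finset.sum_congr rfl fun A hA => ?_
      obtain ⟨hAF, hxA⟩ := Finset.mem_filter.mp hA
      have hsub : A ⊆ insert x s := Finset.mem_powerset.mp (hF hAF)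
      have hle : A.card ≤ s.card + 1 := by
        simpa [Finset.card_insert_of_notMem hx] using Finset.card_le_card hsub
      have hcard : A.card = (A.erase x).card + 1 := by
        rw [Finset.card_erase_of_mem hxA]
        have : 1 ≤ A.card := Finset.card_pos.mpr ⟨x, hxA⟩
        omega
      rw [hcard, show s.card + 1 - ((A.erase x).card + 1) = s.card - (A.erase x).card from by omega,
        pow_succ]
      ring
    · intro A hA B hB hAB
      have hxA := (Finset.mem_filter.mp hA).2
      have hxB := (Finset.mem_filter.mp hB).2
      rw [← Finset.insert_erase hxA, ← Finset.insert_erase hxB, show A.erase x = B.erase x from hAB]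
  have h2 : ∑ A ∈ F.filter (fun A => x ∉ A), p ^ A.card * (1 - p) ^ (s.card + 1 - A.card)
      = (1 - p) * ∑ A ∈ F.filter (fun A => x ∉ A),
          p ^ A.card * (1 - p) ^ (s.card - A.card) := by
    rw [Finset.mul_sum]
    refine Finset.sum_congr rfl fun A hA => ?_
    obtain ⟨hAF, hxA⟩ := Finset.mem_filter.mp hA
    have hAs : A ⊆ s := by
      intro y hy
      rcases Finset.mem_insert.mp (Finset.mem_powerset.mp (hF hAF) hy) with rfl | h
      · exact absurd hy hxA
      · exact h
    have : A.card ≤ s.card := Finset.card_le_card hAs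
    rw [show s.card + 1 - A.card = (s.card - A.card) + 1 from by omega, pow_succ]
    ring
  rw [h1, h2]
  ring

lemma phi_powerset (U : Finset α) (p : ℝ) : phi U U.powerset p = 1 := by
  classical
  induction U using Finset.induction_on with
  | empty => simp [phi]
  | @insert x s hx ih =>
    rw [phi_split hx (Finset.Subset.refl _) p]
    have e0 : (insert x s).powerset.filter (fun A => x ∉ A) = s.powerset := by
      ext A
      simp only [Finset.mem_filter, Finset.mem_powerset]
      constructor
      · rintro ⟨hsub, hxA⟩
        exact (Finset.subset_insert_iff_of_notMem hxA).mp hsub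
      · intro h
        exact ⟨h.trans (Finset.subset_insert _ _), fun hxa => hx (h hxa)⟩
    have e1 : ((insert x s).powerset.filter fun A => x ∈ A).image (fun A => A.erase x)
        = s.powerset := by
      ext B
      simp only [Finset.mem_image, Finset.mem_filter, Finset.mem_powerset]
      constructor
      · rintro ⟨A, ⟨hsub, _⟩, rfl⟩
        intro y hy
        have := Finset.mem_erase.mp hy
        rcases Finset.mem_insert.mp (hsub this.2) with rfl | h
        · exact absurd rfl this.1
        · exact h
      · intro hB
        have hxB : x ∉ B := fun h => hx (hB h)
        exact ⟨insert x B, ⟨Finset.insert_subset_insert x hB, Finset.mem_insert_self x B⟩,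
          Finset.erase_insert hxB⟩
    rw [e0, e1, ih]
    ring

lemma phi_le_one {U : Finset α} {F : Finset (Finset α)} (hF : F ⊆ U.powerset) {p : ℝ}
    (h0 : 0 ≤ p) (h1 : p ≤ 1) : phi U F p ≤ 1 :=
  (phi_mono hF h0 h1).trans_eq (phi_powerset U p)

/-- Efron–Stein + Russo: for a monotone family, `φ(1-φ) ≤ p(1-p)φ'`. -/
lemma phi_key (U : Finset α) (F : Finset (Finset α)) (hF : F ⊆ U.powerset)
    (hmono : ∀ A ∈ F, ∀ B ∈ U.powerset, A ⊆ B → B ∈ F) (p : ℝ) (h0 : 0 ≤ p) (h1 : p ≤ 1) :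
    ∃ D, HasDerivAt (phi U F) D p ∧ phi U F p * (1 - phi U F p) ≤ p * (1 - p) * D := by
  classical
  induction U using Finset.induction_on generalizing F with
  | empty =>
    have hF' : F ⊆ {∅} := by simpa using hF
    rcases Finset.subset_singleton_iff.mp hF' with rfl | rfl
    · refine ⟨0, ?_, by simp [phi]⟩
      have : phi (∅ : Finset α) (∅ : Finset (Finset α)) = fun _ => (0 : ℝ) := by
        funext q; simp [phi]
      rw [this]
      exact hasDerivAt_const p 0
    · refine ⟨0, ?_, by simp [phi]⟩
      have : phi (∅ : Finset α) ({∅} : Finset (Finset α)) = fun _ => (1 : ℝ) := by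
        funext q; simp [phi]
      rw [this]
      exact hasDerivAt_const p 1
  | @insert x s hx ih =>
    set F₀ := F.filter (fun A => x ∉ A) with hF₀def
    set F₁ := (F.filter fun A => x ∈ A).image (fun A => A.erase x) with hF₁def
    have hF₀sub : F₀ ⊆ s.powerset := by
      intro A hA
      obtain ⟨hAF, hxA⟩ := Finset.mem_filter.mp hA
      rw [Finset.mem_powerset]
      exact (Finset.subset_insert_iff_of_notMem hxA).mp (Finset.mem_powerset.mp (hF hAF))
    have hF₁sub : F₁ ⊆ s.powerset := by
      intro B hB
      obtain ⟨A, hA, rfl⟩ := Finset.mem_image.mp hB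
      obtain ⟨hAF, hxA⟩ := Finset.mem_filter.mp hA
      rw [Finset.mem_powerset]
      intro y hy
      have hy' := Finset.mem_erase.mp hy
      rcases Finset.mem_insert.mp (Finset.mem_powerset.mp (hF hAF) hy'.2) with rfl | h
      · exact absurd rfl hy'.1
      · exact h
    have hF₀mono : ∀ A ∈ F₀, ∀ B ∈ s.powerset, A ⊆ B → B ∈ F₀ := by
      intro A hA B hB hAB
      obtain ⟨hAF, hxA⟩ := Finset.mem_filter.mp hA
      have hBs := Finset.mem_powerset.mp hB
      refine Finset.mem_filter.mpr ⟨hmono A hAF B ?_ hAB, fun hxB => hx (hBs hxB)⟩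
      exact Finset.mem_powerset.mpr (hBs.trans (Finset.subset_insert _ _))
    have hF₁mono : ∀ A ∈ F₁, ∀ B ∈ s.powerset, A ⊆ B → B ∈ F₁ := by
      intro A hA B hB hAB
      obtain ⟨C, hC, rfl⟩ := Finset.mem_image.mp hA
      obtain ⟨hCF, hxC⟩ := Finset.mem_filter.mp hC
      have hBs := Finset.mem_powerset.mp hB
      have hxB : x ∉ B := fun h => hx (hBs h)
      have hCB : C ⊆ insert x B := by
        rw [← Finset.insert_erase hxC]
        exact Finset.insert_subset_insert x hAB
      have hIB : insert x B ∈ F := by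
        refine hmono C hCF (insert x B) ?_ hCB
        exact Finset.mem_powerset.mpr (Finset.insert_subset_insert x hBs)
      refine Finset.mem_image.mpr ⟨insert x B, Finset.mem_filter.mpr ⟨hIB, Finset.mem_insert_self x B⟩, Finset.erase_insert hxB⟩
    have h01 : F₀ ⊆ F₁ := by
      intro A hA
      obtain ⟨hAF, hxA⟩ := Finset.mem_filter.mp hA
      have hAs : A ⊆ insert x s := Finset.mem_powerset.mp (hF hAF)
      have hIA : insert x A ∈ F := by
        refine hmono A hAF (insert x A) ?_ (Finset.subset_insert _ _)
        rw [Finset.mem_powerset]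
        intro y hy
        rcases Finset.mem_insert.mp hy with rfl | h
        · exact Finset.mem_insert_self _ _
        · exact hAs h
      exact Finset.mem_image.mpr ⟨insert x A, Finset.mem_filter.mpr ⟨hIA, Finset.mem_insert_self x A⟩, Finset.erase_insert hxA⟩
    obtain ⟨D₀, hD₀, hI₀⟩ := ih F₀ hF₀sub hF₀mono
    obtain ⟨D₁, hD₁, hI₁⟩ := ih F₁ hF₁sub hF₁mono
    have hfun : phi (insert x s) F = fun q => (1 - q) * phi s F₀ q + q * phi s F₁ q :=
      funext fun q => phi_split hx hF q
    have hab : phi s F₀ p ≤ phi s F₁ p := phi_mono h01 h0 h1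
    have ha0 : 0 ≤ phi s F₀ p := phi_nonneg _ _ h0 h1
    have hb1 : phi s F₁ p ≤ 1 := phi_le_one hF₁sub h0 h1
    set a := phi s F₀ p
    set b := phi s F₁ p
    refine ⟨(b - a) + (1 - p) * D₀ + p * D₁, ?_, ?_⟩
    · rw [hfun]
      have h := (((hasDerivAt_const p (1:ℝ)).sub (hasDerivAt_id p)).mul hD₀).add
        ((hasDerivAt_id p).mul hD₁)
      have h' : HasDerivAt (fun q => (1 - q) * phi s F₀ q + q * phi s F₁ q)
          ((0 - 1) * a + (1 - p) * D₀ + (1 * b + p * D₁)) p := h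
      convert h' using 1
      ring
    · rw [phi_split hx hF p]
      have hh0 : (1 - p) * (a * (1 - a)) ≤ (1 - p) * (p * (1 - p) * D₀) :=
        mul_le_mul_of_nonneg_left hI₀ (by linarith)
      have hh1 : p * (b * (1 - b)) ≤ p * (p * (1 - p) * D₁) :=
        mul_le_mul_of_nonneg_left hI₁ h0
      have hh2 : 0 ≤ (p * (1 - p)) * ((b - a) * (1 - (b - a))) :=
        mul_nonneg (mul_nonneg h0 (by linarith))
          (mul_nonneg (by linarith) (by linarith))
      nlinarith [hh0, hh1, hh2]

/-- The random-coloring bound at the endpoint `q = 1 - 1/k`. -/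
lemma phi_coloring {k n : ℕ} (hk : 2 ≤ k) (M : Finset (Finset (Fin n)))
    (hM : ∀ G : Fin k → Finset (Fin n), (∀ i : Fin k, G i ∈ M) →
      ∃ x : Fin n, ∀ i : Fin k, x ∈ G i) :
    phi Finset.univ M (1 - 1/(k:ℝ)) ≤ 1 - 1/(k:ℝ) := by
  classical
  -- fiber counting
  have hfiber : ∀ (j : Fin k) (A : Finset (Fin n)),
      (univ.filter fun c : Fin n → Fin k => (univ.filter fun x => c x ≠ j) = A).card
        = (k-1)^A.card := by
    intro j A
    have hEq : (univ.filter fun c : Fin n → Fin k => (univ.filter fun x => c x ≠ j) = A)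
        = Fintype.piFinset (fun x => if x ∈ A then ({j}ᶜ : Finset (Fin k)) else {j}) := by
      ext c
      simp only [mem_filter, mem_univ, true_and, Fintype.mem_piFinset]
      constructor
      · intro h x
        have hx := Finset.ext_iff.mp h x
        simp only [mem_filter, mem_univ, true_and] at hx
        by_cases hxA : x ∈ A
        · simp only [hxA, if_true, Finset.mem_compl, Finset.mem_singleton]
          exact hx.mpr hxA
        · simp only [hxA, if_false, Finset.mem_singleton]
          by_contra hcx
          exact hxA (hx.mp hcx)
      · intro h
        ext x
        simp only [mem_filter, mem_univ, true_and]
        have hx := h x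
        by_cases hxA : x ∈ A
        · simp only [hxA, if_true, Finset.mem_compl, Finset.mem_singleton] at hx
          simp [hxA, hx]
        · simp only [hxA, if_false, Finset.mem_singleton] at hx
          simp [hxA, hx]
    rw [hEq, Fintype.card_piFinset]
    have hcardite : ∀ x : Fin n, (if x ∈ A then ({j}ᶜ : Finset (Fin k)) else {j}).card
        = if x ∈ A then k - 1 else 1 := by
      intro x
      by_cases hxA : x ∈ A <;> simp [hxA, Finset.card_compl]
    simp only [hcardite]
    rw [Finset.prod_ite, Finset.prod_const, Finset.prod_const, one_pow, mul_one,
      show (univ.filter fun x => x ∈ A) = A from by ext y; simp]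
  -- per-color count
  have hcount : ∀ j : Fin k,
      (univ.filter fun c : Fin n → Fin k => (univ.filter fun x => c x ≠ j) ∈ M).card
        = ∑ A ∈ M, (k-1)^A.card := by
    intro j
    rw [Finset.card_eq_sum_card_fiberwise
      (f := fun c : Fin n → Fin k => univ.filter fun x => c x ≠ j)
      (s := univ.filter fun c : Fin n → Fin k => (univ.filter fun x => c x ≠ j) ∈ M)
      (t := M) (fun c hc => (mem_filter.mp hc).2)]
    refine Finset.sum_congr rfl fun A hA => ?_
    rw [Finset.filter_filter]
    rw [← hfiber j A]
    congr 1
    ext c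
    simp only [mem_filter, mem_univ, true_and]
    constructor
    · exact fun h => h.2
    · exact fun h => ⟨h ▸ hA, h⟩
  -- per-coloring bound
  have hbound : ∀ c : Fin n → Fin k,
      (univ.filter fun j : Fin k => (univ.filter fun x => c x ≠ j) ∈ M).card ≤ k - 1 := by
    intro c
    have hne : (univ.filter fun j : Fin k => (univ.filter fun x => c x ≠ j) ∈ M) ≠ univ := by
      intro hEq
      have hall : ∀ j : Fin k, (univ.filter fun x => c x ≠ j) ∈ M := by
        intro j
        have : j ∈ univ.filter fun j : Fin k => (univ.filter fun x => c x ≠ j) ∈ M := by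
          rw [hEq]; exact mem_univ j
        exact (mem_filter.mp this).2
      obtain ⟨x, hx⟩ := hM (fun j => univ.filter fun y => c y ≠ j) hall
      have := hx (c x)
      simp at this
    have hss : (univ.filter fun j : Fin k => (univ.filter fun x => c x ≠ j) ∈ M) ⊂ univ :=
      (Finset.ssubset_iff_subset_ne).mpr ⟨Finset.subset_univ _, hne⟩
    have := Finset.card_lt_card hss
    rw [Finset.card_univ, Fintype.card_fin] at this
    omega
  -- combine counts
  set S : ℕ := ∑ A ∈ M, (k-1)^A.card with hS
  have hN : k * S ≤ (k-1) * k^n := by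
    have swap : ∑ j : Fin k,
        (univ.filter fun c : Fin n → Fin k => (univ.filter fun x => c x ≠ j) ∈ M).card
        = ∑ c : Fin n → Fin k,
        (univ.filter fun j : Fin k => (univ.filter fun x => c x ≠ j) ∈ M).card := by
      simp only [Finset.card_filter]
      exact Finset.sum_comm
    calc k * S = ∑ _j : Fin k, S := by
          rw [Finset.sum_const, Finset.card_univ, Fintype.card_fin, smul_eq_mul]
      _ = ∑ j : Fin k,
            (univ.filter fun c : Fin n → Fin k => (univ.filter fun x => c x ≠ j) ∈ M).card :=
          (Finset.sum_congr rfl fun j _ => (hcount j).symm)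
      _ = ∑ c : Fin n → Fin k,
            (univ.filter fun j : Fin k => (univ.filter fun x => c x ≠ j) ∈ M).card := swap
      _ ≤ ∑ _c : Fin n → Fin k, (k-1) := Finset.sum_le_sum fun c _ => hbound c
      _ = (k-1) * k^n := by
          rw [Finset.sum_const, Finset.card_univ, Fintype.card_fun, Fintype.card_fin,
            Fintype.card_fin, smul_eq_mul, mul_comm]
  -- translate to reals
  have hk0 : (0:ℝ) < (k:ℝ) := by
    have : (0:ℕ) < k := by omega
    exact_mod_cast this
  have hkn : (0:ℝ) < (k:ℝ)^n := pow_pos hk0 n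
  have hphiM : phi Finset.univ M (1 - 1/(k:ℝ)) = (S:ℝ)/(k:ℝ)^n := by
    unfold phi
    rw [eq_div_iff hkn.ne', Finset.sum_mul]
    have hScast : (S:ℝ) = ∑ A ∈ M, ((k:ℝ)-1)^A.card := by
      rw [hS]
      push_cast [Nat.cast_sub (by omega : 1 ≤ k)]
      ring_nf
    rw [hScast]
    refine Finset.sum_congr rfl fun A hA => ?_
    have hAcard : A.card ≤ n := by
      simpa using Finset.card_le_univ A
    have h1q : 1 - (1 - 1/(k:ℝ)) = 1/(k:ℝ) := by ring
    rw [h1q, Finset.card_univ, Fintype.card_fin]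
    rw [show (k:ℝ)^n = (k:ℝ)^A.card * (k:ℝ)^(n - A.card) from by
      rw [← pow_add]; congr 1; omega]
    calc (1 - 1/(k:ℝ)) ^ A.card * (1/(k:ℝ)) ^ (n - A.card)
          * ((k:ℝ)^A.card * (k:ℝ)^(n - A.card))
        = ((1 - 1/(k:ℝ)) * (k:ℝ)) ^ A.card * ((1/(k:ℝ)) * (k:ℝ)) ^ (n - A.card) := by
          rw [mul_pow, mul_pow]; ring
      _ = ((k:ℝ)-1)^A.card := by
          rw [show (1 - 1/(k:ℝ)) * (k:ℝ) = (k:ℝ)-1 from by field_simp,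
            show (1/(k:ℝ)) * (k:ℝ) = 1 from by field_simp, one_pow, mul_one]
  rw [hphiM, show (1:ℝ) - 1/(k:ℝ) = ((k:ℝ)-1)/(k:ℝ) from by field_simp,
    div_le_div_iff₀ hkn hk0]
  have hNcast : (k:ℝ) * (S:ℝ) ≤ ((k:ℝ)-1) * (k:ℝ)^n := by
    have := hN
    have h1k : 1 ≤ k := by omega
    exact_mod_cast (by push_cast [Nat.cast_sub h1k] at *; exact_mod_cast (Nat.cast_le.mpr hN : ((k*S:ℕ):ℝ) ≤ (((k-1)*k^n:ℕ):ℝ)))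
  linarith


end FranklTokushigeAux

open FranklTokushigeAux Finset

/-- **Frankl–Tokushige theorem on `k`-wise intersecting families.** Let `k ≥ 2` and
`0 ≤ p ≤ 1 - 1/k`. If `F` is a family of subsets of an `n`-element ground set such that any
`k` members of `F` (repetitions allowed) have a common element, then the `p`-biased measure
`μ_p(F) = ∑_{A ∈ F} p^{|A|}(1-p)^{n-|A|}` is at most `p`. -/


theorem frankl_tokushige_k_wise_intersecting (k n : ℕ) (hk : 2 ≤ k) (hn : 1 ≤ n)
    (p : ℝ) (hp0 : 0 ≤ p) (hp1 : p ≤ 1 - 1 / (k : ℝ))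
    (F : Finset (Finset (Fin n)))
    (hint : ∀ G : Fin k → Finset (Fin n), (∀ i : Fin k, G i ∈ F) →
      ∃ x : Fin n, ∀ i : Fin k, x ∈ G i) :
    ∑ A ∈ F, p ^ A.card * (1 - p) ^ (n - A.card) ≤ p := by
  classical
  have hgoalphi : ∀ r : ℝ, phi (univ : Finset (Fin n)) F r
      = ∑ A ∈ F, r ^ A.card * (1 - r) ^ (n - A.card) := by
    intro r; unfold phi; rw [Finset.card_univ, Fintype.card_fin]
  rw [← hgoalphi]
  -- trivial case: F empty
  rcases F.eq_empty_or_nonempty with rfl | hFne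
  · simpa [phi] using hp0
  -- the empty set is not in F
  have hempty : (∅ : Finset (Fin n)) ∉ F := by
    intro h
    obtain ⟨x, hx⟩ := hint (fun _ => ∅) (fun _ => h)
    exact Finset.notMem_empty x (hx ⟨0, by omega⟩)
  -- monotone closure
  set M := (univ : Finset (Fin n)).powerset.filter (fun A => ∃ B ∈ F, B ⊆ A) with hMdef
  have hFM : F ⊆ M := by
    intro A hA
    exact mem_filter.mpr ⟨mem_powerset.mpr (subset_univ A), A, hA, Finset.Subset.refl A⟩
  have hMsub : M ⊆ (univ : Finset (Fin n)).powerset := filter_subset _ _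
  have hMmono : ∀ A ∈ M, ∀ B ∈ (univ : Finset (Fin n)).powerset, A ⊆ B → B ∈ M := by
    intro A hA B hB hAB
    obtain ⟨-, C, hCF, hCA⟩ := mem_filter.mp hA
    exact mem_filter.mpr ⟨hB, C, hCF, hCA.trans hAB⟩
  have hMint : ∀ G : Fin k → Finset (Fin n), (∀ i : Fin k, G i ∈ M) →
      ∃ x : Fin n, ∀ i : Fin k, x ∈ G i := by
    intro G hG
    have hex : ∀ i : Fin k, ∃ B, B ∈ F ∧ B ⊆ G i := by
      intro i
      obtain ⟨-, B, hBF, hBsub⟩ := mem_filter.mp (hG i)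
      exact ⟨B, hBF, hBsub⟩
    choose B hBF hBsub using hex
    obtain ⟨x, hx⟩ := hint B hBF
    exact ⟨x, fun i => hBsub i (hx i)⟩
  have hMempty : (∅ : Finset (Fin n)) ∉ M := by
    intro h
    obtain ⟨-, B, hBF, hBsub⟩ := mem_filter.mp h
    rw [Finset.subset_empty.mp hBsub] at hBF
    exact hempty hBF
  have hMuniv : (univ : Finset (Fin n)) ∈ M := by
    obtain ⟨B, hB⟩ := hFne
    exact mem_filter.mpr ⟨mem_powerset.mpr (Finset.Subset.refl _), B, hB, subset_univ B⟩
  -- basic parameters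
  have hk2 : (2:ℝ) ≤ (k:ℝ) := by exact_mod_cast hk
  set q : ℝ := 1 - 1/(k:ℝ) with hqdef
  have hinvk : 0 < 1/(k:ℝ) := by positivity
  have hinvk2 : 1/(k:ℝ) ≤ 1/2 := by
    rw [div_le_div_iff₀ (by linarith) (by norm_num)]; linarith
  have hq1 : q < 1 := by rw [hqdef]; linarith
  have hq0 : 0 < q := by rw [hqdef]; linarith
  have hp1' : p ≤ 1 := le_trans hp1 hq1.le
  have hcol : phi (univ : Finset (Fin n)) M q ≤ q := phi_coloring hk M hMint
  -- case p = 0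
  rcases hp0.eq_or_lt with heq | hppos
  · rw [← heq]
    have : phi (univ : Finset (Fin n)) F 0 = 0 := by
      unfold phi
      refine Finset.sum_eq_zero fun A hA => ?_
      have hAne : A ≠ ∅ := fun h => hempty (h ▸ hA)
      rw [zero_pow (fun h => hAne (Finset.card_eq_zero.mp h))]
      ring
    rw [this]
  -- case p = q
  rcases hp1.eq_or_lt with heq | hplt
  · rw [heq]
    exact (phi_mono hFM (by rw [← heq]; exact hp0) hq1.le).trans hcol
  -- main case : 0 < p < q
  set f : ℝ → ℝ := phi (univ : Finset (Fin n)) M with hfdef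
  have hfc : Continuous f := phi_continuous _ _
  have fpos : ∀ r : ℝ, 0 < r → r ≤ 1 → 0 < f r := by
    intro r h0 h1
    have hterm : (0:ℝ) < r ^ (univ : Finset (Fin n)).card
        * (1 - r) ^ ((univ : Finset (Fin n)).card - (univ : Finset (Fin n)).card) := by
      rw [Nat.sub_self, pow_zero, mul_one]
      exact pow_pos h0 _
    refine lt_of_lt_of_le hterm ?_
    exact Finset.single_le_sum
      (f := fun A : Finset (Fin n) => r ^ A.card * (1 - r) ^ ((univ : Finset (Fin n)).card - A.card))
      (fun A _ => mul_nonneg (pow_nonneg h0.le _) (pow_nonneg (by linarith) _)) hMuniv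
  have fless : ∀ r : ℝ, 0 ≤ r → r < 1 → f r < 1 := by
    intro r h0 h1
    have hins : phi (univ : Finset (Fin n)) (insert ∅ M) r = (1-r)^n + f r := by
      rw [hfdef]
      unfold phi
      rw [Finset.sum_insert hMempty]
      simp [Finset.card_univ]
    have hinssub : insert ∅ M ⊆ (univ : Finset (Fin n)).powerset := by
      rw [Finset.insert_subset_iff]
      exact ⟨mem_powerset.mpr (empty_subset _), hMsub⟩
    have hle1 := phi_le_one hinssub h0 h1.le
    rw [hins] at hle1
    have : (0:ℝ) < (1-r)^n := pow_pos (by linarith) n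
    linarith
  -- the log-odds function
  set g : ℝ → ℝ := fun r => ((Real.log (f r) - Real.log (1 - f r)) - Real.log r)
      + Real.log (1 - r) with hgdef
  have hIcc : ∀ r ∈ Set.Icc p q, 0 < r ∧ r < 1 :=
    fun r hr => ⟨lt_of_lt_of_le hppos hr.1, lt_of_le_of_lt hr.2 hq1⟩
  have hderiv : ∀ r ∈ Set.Ioo p q, ∃ Dg, HasDerivAt g Dg r ∧ 0 ≤ Dg := by
    intro r hr
    have hr0 : 0 < r := hppos.trans hr.1
    have hr1 : r < 1 := hr.2.trans hq1
    have hr1' : (0:ℝ) < 1 - r := by linarith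
    obtain ⟨D, hD, hIq⟩ := phi_key (univ : Finset (Fin n)) M hMsub hMmono r hr0.le hr1.le
    have ha0 : 0 < f r := fpos r hr0 hr1.le
    have ha1 : f r < 1 := fless r hr0.le hr1
    have ha1' : (0:ℝ) < 1 - f r := by linarith
    have h1 : HasDerivAt (fun y => Real.log (f y)) (D / f r) r := hD.log ha0.ne'
    have h2 : HasDerivAt (fun y => Real.log (1 - f y)) ((0 - D) / (1 - f r)) r :=
      (((hasDerivAt_const r (1:ℝ)).sub hD).log ha1'.ne')
    have h3 : HasDerivAt Real.log r⁻¹ r := Real.hasDerivAt_log hr0.ne'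
    have h4 : HasDerivAt (fun y : ℝ => Real.log (1 - y)) ((0 - 1) / (1 - r)) r :=
      (((hasDerivAt_const r (1:ℝ)).sub (hasDerivAt_id r)).log hr1'.ne')
    have hg : HasDerivAt g ((D / f r - (0 - D) / (1 - f r)) - r⁻¹ + (0 - 1) / (1 - r)) r := by
      rw [hgdef]
      exact ((h1.sub h2).sub h3).add h4
    refine ⟨_, hg, ?_⟩
    have e : (D / f r - (0 - D) / (1 - f r)) - r⁻¹ + (0 - 1) / (1 - r)
        = D / (f r * (1 - f r)) - 1 / (r * (1 - r)) := by
      field_simp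
      ring
    rw [e, sub_nonneg]
    rw [div_le_div_iff₀ (mul_pos hr0 hr1') (mul_pos ha0 ha1')]
    nlinarith [hIq]
  have hgmono : MonotoneOn g (Set.Icc p q) := by
    apply monotoneOn_of_deriv_nonneg (convex_Icc p q)
    · have c1 : ContinuousOn (fun r => Real.log (f r)) (Set.Icc p q) :=
        ContinuousOn.log hfc.continuousOn
          (fun r hr => (fpos r (hIcc r hr).1 (hIcc r hr).2.le).ne')
      have c2 : ContinuousOn (fun r => Real.log (1 - f r)) (Set.Icc p q) :=
        ContinuousOn.log (continuous_const.sub hfc).continuousOn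
          (fun r hr => (by
            have := fless r (hIcc r hr).1.le (hIcc r hr).2
            have : (0:ℝ) < 1 - f r := by linarith
            exact this.ne' : (1:ℝ) - f r ≠ 0))
      have c3 : ContinuousOn Real.log (Set.Icc p q) :=
        ContinuousOn.log continuousOn_id (fun r hr => (hIcc r hr).1.ne')
      have c4 : ContinuousOn (fun r : ℝ => Real.log (1 - r)) (Set.Icc p q) :=
        ContinuousOn.log (continuous_const.sub continuous_id).continuousOn
          (fun r hr => (by
            have := (hIcc r hr).2
            have : (0:ℝ) < 1 - r := by linarith
            exact this.ne' : (1:ℝ) - r ≠ 0))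
      rw [hgdef]
      exact ((c1.sub c2).sub c3).add c4
    · rw [interior_Icc]
      intro r hr
      obtain ⟨Dg, hg, _⟩ := hderiv r hr
      exact hg.differentiableAt.differentiableWithinAt
    · rw [interior_Icc]
      intro r hr
      obtain ⟨Dg, hg, hDg⟩ := hderiv r hr
      rw [hg.deriv]
      exact hDg
  have hgle : g p ≤ g q := hgmono (Set.mem_Icc.mpr ⟨le_refl p, hplt.le⟩)
    (Set.mem_Icc.mpr ⟨hplt.le, le_refl q⟩) hplt.le
  -- g q ≤ 0
  have hfq0 : 0 < f q := fpos q hq0 hq1.le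
  have hfq1 : f q < 1 := fless q hq0.le hq1
  have hgq : g q ≤ 0 := by
    have l1 : Real.log (f q) ≤ Real.log q := Real.log_le_log hfq0 hcol
    have l2 : Real.log (1 - q) ≤ Real.log (1 - f q) :=
      Real.log_le_log (by linarith) (by linarith)
    rw [hgdef]
    simp only []
    linarith
  have hgp : g p ≤ 0 := hgle.trans hgq
  -- conclude f p ≤ p
  have hfp0 : 0 < f p := fpos p hppos hp1'
  have hfp1 : f p < 1 := fless p hp0 (hplt.trans hq1)
  have hp1'' : (0:ℝ) < 1 - p := by linarith [hplt.trans hq1]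
  have hfp1' : (0:ℝ) < 1 - f p := by linarith
  have hlog : Real.log (f p * (1 - p)) ≤ Real.log (p * (1 - f p)) := by
    rw [Real.log_mul hfp0.ne' hp1''.ne', Real.log_mul hppos.ne' hfp1'.ne']
    rw [hgdef] at hgp
    simp only [] at hgp
    linarith
  have hmul : f p * (1 - p) ≤ p * (1 - f p) := by
    have h := Real.exp_le_exp.mpr hlog
    rwa [Real.exp_log (mul_pos hfp0 hp1''), Real.exp_log (mul_pos hppos hfp1')] at h
  have hfple : f p ≤ p := by nlinarith
  exact (phi_mono hFM hp0 hp1').trans hfple
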